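/- The long-term success probability of non-persistent users, φ_0 := ∑_{w legitimate} θ(busy(w)) · p(w), satisfies φ_0 = B · ∑_{y=0}^{m} ∑_{b=0}^{min(y,n)} (ρ^{y−b}/(y−b)!) · (∏_{r=0}^{y} θ(r)) · c_b, where ρ = ∑_{i=1}^k ρ_i and c_b = ∑_{a ∈ {I,W,T}^n : #{j : a_j=T} = b} ∏_{j=1}^n (α_j/β_j)^{[a_j=W]} (α_j u_j/(β_j v_j))^{[a_j=T]}. -/

import Mathlib

/-- Activity state of a persistent user: Idle, Waiting, or Transmitting. -/
inductive Act : Type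
  | I : Act
  | W : Act
  | T : Act
deriving DecidableEq

instance : Fintype Act where
  elems := {Act.I, Act.W, Act.T}
  complete := by intro x; cases x <;> simp

/-- Number of persistent users that are transmitting. -/
def busyP {n : ℕ} (a : Fin n → Act) : ℕ :=
  (Finset.univ.filter (fun j => a j = Act.T)).card

/-- The factor `(α/β)^{[a=W]} (αu/(βv))^{[a=T]}` contributed by one persistent user. -/
noncomputable def fac (α β u v : ℝ) : Act → ℝ
  | Act.I => 1
  | Act.W => α / β
  | Act.T => α * u / (β * v)

lemma multinom_exp {k : ℕ} (ρ : Fin k → ℝ) (y : ℕ) :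
    ∑ x ∈ Finset.Nat.antidiagonalTuple k y, ∏ i, ρ i ^ x i / (x i).factorial
      = (∑ i, ρ i) ^ y / y.factorial := by
  rw [← Finset.piAntidiag_univ_fin_eq_antidiagonalTuple,
    Finset.sum_pow_eq_sum_piAntidiag, Finset.sum_div]
  refine Finset.sum_congr rfl fun x hx => ?_
  have hsum : ∑ i, x i = y := by
    simpa using (Finset.mem_piAntidiag.mp hx).1
  have spec := Nat.multinomial_spec Finset.univ x
  rw [hsum] at spec
  rw [Finset.prod_div_distrib]
  have h1 : (∏ i, ((x i).factorial : ℝ)) ≠ 0 := by positivity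
  have h2 : ((y.factorial : ℝ)) ≠ 0 := by positivity
  field_simp
  rw [show ((∏ i, ρ i ^ x i) * ∏ i, ((x i).factorial : ℝ)) * (Nat.multinomial Finset.univ x : ℝ)
      = ((∏ i, ((x i).factorial : ℝ)) * (Nat.multinomial Finset.univ x : ℝ)) * ∏ i, ρ i ^ x i by ring]
  norm_cast
  rw [spec]
  ring


/-- the long-term success probability of non-persistent users,
`φ₀ = ∑_{w legitimate} θ(busy(w)) p(w)`, equals
`B ∑_{y=0}^m ∑_{b=0}^{min(y,n)} (ρ^{y-b}/(y-b)!) (∏_{r=0}^{y} θ(r)) c_b`. -/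
theorem success_probability_nonpersistent_users
    (m k n : ℕ) (hm : 0 < m) (hk : 0 < k) (hn : 0 < n)
    (θ : ℕ → ℝ)
    (hθ1 : ∀ b ≤ m, 0 ≤ θ b ∧ θ b ≤ 1)
    (hθ2 : ∀ b < m, 0 < θ b)
    (hθ3 : θ m = 0)
    (lam μ : Fin k → ℝ) (hlam : ∀ i, 0 < lam i) (hμ : ∀ i, 0 < μ i)
    (α β u v : Fin n → ℝ)
    (hα : ∀ j, 0 < α j) (hβ : ∀ j, 0 < β j) (hu : ∀ j, 0 < u j) (hv : ∀ j, 0 < v j)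
    (ρ : Fin k → ℝ) (hρ : ∀ i, ρ i = lam i / μ i)
    (B : ℝ) (hB : 0 < B)
    (p : (Fin k → ℕ) → (Fin n → Act) → ℝ)
    (hp : ∀ (x : Fin k → ℕ) (a : Fin n → Act),
      p x a = B * (∏ r ∈ Finset.range (∑ i, x i + busyP a), θ r) *
        (∏ i, ρ i ^ (x i) / (x i).factorial) *
        ∏ j, fac (α j) (β j) (u j) (v j) (a j))
    (c : ℕ → ℝ)
    (hc : ∀ b, c b = ∑ a ∈ Finset.univ.filter (fun a : Fin n → Act => busyP a = b),
      ∏ j, fac (α j) (β j) (u j) (v j) (a j))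
    (φ₀ : ℝ)
    (hφ₀ : φ₀ = ∑ a : Fin n → Act, ∑ xt ∈ Finset.range (m + 1 - busyP a),
      ∑ x ∈ Finset.Nat.antidiagonalTuple k xt, θ (∑ i, x i + busyP a) * p x a) :
    φ₀ = B * ∑ y ∈ Finset.range (m + 1), ∑ b ∈ Finset.range (min y n + 1),
      (∑ i, ρ i) ^ (y - b) / (y - b).factorial *
        (∏ r ∈ Finset.range (y + 1), θ r) * c b := by
  classical
  set F : (Fin n → Act) → ℝ := fun a => ∏ j, fac (α j) (β j) (u j) (v j) (a j) with hF
  have hbn : ∀ a : Fin n → Act, busyP a ≤ n := fun a => by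
    simpa [busyP] using Finset.card_filter_le (Finset.univ : Finset (Fin n)) _
  set g : ℕ → ℕ → ℝ := fun y b =>
    (∑ i, ρ i) ^ (y - b) / (y - b).factorial * (∏ r ∈ Finset.range (y + 1), θ r) with hg
  -- LHS computation
  have key : φ₀ = ∑ a : Fin n → Act, ∑ y ∈ Finset.Icc (busyP a) m, B * g y (busyP a) * F a := by
    rw [hφ₀]
    refine Finset.sum_congr rfl fun a _ => ?_
    rw [← Finset.Ico_add_one_right_eq_Icc, Finset.sum_Ico_eq_sum_range]
    refine Finset.sum_congr rfl fun xt _ => ?_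
    have inner : ∀ x ∈ Finset.Nat.antidiagonalTuple k xt,
        θ (∑ i, x i + busyP a) * p x a
          = (B * (θ (xt + busyP a) * ∏ r ∈ Finset.range (xt + busyP a), θ r) * F a)
              * ∏ i, ρ i ^ (x i) / (x i).factorial := by
      intro x hx
      have hx' : ∑ i, x i = xt := Finset.Nat.mem_antidiagonalTuple.mp hx
      rw [hp, hx']
      simp only [hF]
      ring
    rw [Finset.sum_congr rfl inner, ← Finset.mul_sum, multinom_exp]
    have h1 : busyP a + xt - busyP a = xt := by omega
    have h2 : Finset.range (busyP a + xt + 1) = Finset.range (xt + busyP a + 1) := by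
      rw [Nat.add_comm (busyP a) xt]
    simp only [hg, h1, h2]
    rw [Finset.prod_range_succ]
    ring
  rw [key]
  -- RHS computation
  refine Eq.symm ?_
  calc B * ∑ y ∈ Finset.range (m + 1), ∑ b ∈ Finset.range (min y n + 1), g y b * c b
      = ∑ y ∈ Finset.range (m + 1), ∑ a ∈ Finset.univ.filter (fun a : Fin n → Act => busyP a ≤ y),
          B * g y (busyP a) * F a := by
        rw [Finset.mul_sum]
        refine Finset.sum_congr rfl fun y _ => ?_
        have : ∀ b ∈ Finset.range (min y n + 1), g y b * c b
            = ∑ a ∈ Finset.univ.filter (fun a : Fin n → Act => busyP a = b), g y (busyP a) * F a := by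
          intro b _
          rw [hc, Finset.mul_sum]
          refine Finset.sum_congr rfl fun a ha => ?_
          rw [(Finset.mem_filter.mp ha).2, hF]
        rw [Finset.sum_congr rfl this,
          Finset.sum_fiberwise_eq_sum_filter Finset.univ (Finset.range (min y n + 1))
            (fun a : Fin n → Act => busyP a) (fun a => g y (busyP a) * F a)]
        rw [Finset.mul_sum]
        refine Finset.sum_congr ?_ fun a _ => by ring
        refine Finset.filter_congr fun a _ => ?_
        simp only [Finset.mem_range, Nat.lt_succ_iff, le_min_iff]
        have := hbn a
        constructor
        · intro h; exact h.1
        · intro h; exact ⟨h, this⟩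
    _ = ∑ a : Fin n → Act, ∑ y ∈ Finset.Icc (busyP a) m, B * g y (busyP a) * F a := by
        simp only [Finset.sum_filter]
        rw [Finset.sum_comm]
        refine Finset.sum_congr rfl fun a _ => ?_
        rw [← Finset.sum_filter]
        refine Finset.sum_congr ?_ fun _ _ => rfl
        ext y
        simp [Nat.lt_succ_iff, and_comm]
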